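/- Let η be the totally antisymmetric array on {1,…,6}³ determined by η(3,4,6) = 1 and η(2,4,5) = −1 (all entries not obtained from these two by permutations being zero), and let D := span{e₁, e₃, e₆} ⊆ ℂ⁶. Then: (i) η is effective, and for every symmetric 3×3 complex matrix A, with v_i := e_i + Σ_{j=1}^{3} A_{ij} e_{j+3} (so L_A = span{v₁,v₂,v₃} is Lagrangian), one has Σ_{i,j,k} η(i,j,k)·(v₁)_i·(v₂)_j·(v₃)_k = 2(A₁₁A₂₃ − A₁₂A₁₃), and this quantity vanishes if and only if L_A ∩ D ≠ {0} (so the hyperplane section of the Lagrangian Grassmannian cut out by η is the Goursat–Schubert cycle E_D); (ii) D^⊥ = span{e₁, e₂, e₅} and D ∩ D^⊥ = ℂ·e₁; (iii) q(η) is the matrix whose only nonzero entry is q(η)(4,4) = 4, so the zero locus {u ∈ ℂ⁶ : q(η)(u,u) = 0} equals {u : u₄ = 0} = (D ∩ D^⊥)^⊥, i.e., the cocharacteristic variety of this Goursat-type Monge–Ampère equation is the hyperplane (D ∩ D^⊥)^⊥. -/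

import Mathlib

open scoped Matrix

noncomputable section

/-- The matrix `J = [[0, I₃], [-I₃, 0]]` of the standard symplectic form on `ℂ⁶`. -/
def J : Matrix (Fin 6) (Fin 6) ℂ :=
  Matrix.of fun i j => if (i : ℕ) + 3 = (j : ℕ) then 1 else if (j : ℕ) + 3 = (i : ℕ) then -1 else 0

/-- The matrix `W = -J`, so `W(i, i+3) = -1` and `W(i+3, i) = 1` for `i = 1, 2, 3`. -/
def W : Matrix (Fin 6) (Fin 6) ℂ := -J

/-- A totally antisymmetric array `η : {1,…,6}³ → ℂ`: it changes sign under the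
transposition of any two of its three arguments. -/
def IsAlt (η : Fin 6 → Fin 6 → Fin 6 → ℂ) : Prop :=
  (∀ i j k, η j i k = -η i j k) ∧ (∀ i j k, η i k j = -η i j k) ∧
    (∀ i j k, η k j i = -η i j k)

/-- An array `η` is effective if `Σ_{i,j} W(i,j) · η(i,j,k) = 0` for every `k`. -/
def IsEff (η : Fin 6 → Fin 6 → Fin 6 → ℂ) : Prop :=
  ∀ k, (∑ i, ∑ j, W i j * η i j k) = 0

/-- The KLR contraction of a `3`-form `η`: the symmetric `6 × 6` matrix with entries
`q(η)(a,b) = Σ_{i,j,h,k} η(a,i,j) · η(b,h,k) · W(i,h) · W(j,k)`. -/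
def klr (η : Fin 6 → Fin 6 → Fin 6 → ℂ) : Matrix (Fin 6) (Fin 6) ℂ :=
  Matrix.of fun a b => ∑ i, ∑ j, ∑ h, ∑ k, η a i j * η b h k * W i h * W j k

/-- The standard symplectic form `ω(u, v) = uᵀ J v` on `ℂ⁶`. -/
def omg (u v : Fin 6 → ℂ) : ℂ := ∑ i, ∑ j, u i * J i j * v j

/-- The Plücker array of vectors `v₁, v₂, v₃ ∈ ℂ⁶`: its `(i,j,k)` entry is the
determinant of the `3 × 3` matrix whose `m`-th row is `((v_m)_i, (v_m)_j, (v_m)_k)`. -/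
def plk (v : Fin 3 → Fin 6 → ℂ) : Fin 6 → Fin 6 → Fin 6 → ℂ :=
  fun i j k => Matrix.det (Matrix.of fun m n => v m (![i, j, k] n))

/-- The `m`-th standard basis vector of `ℂ⁶`. -/
def stdv (m : Fin 6) : Fin 6 → ℂ := fun i => if i = m then 1 else 0

/-- The symplectic orthogonal `D^⊥ = {u ∈ ℂ⁶ : ω(d, u) = 0 for all d ∈ D}` of a
subspace `D ⊆ ℂ⁶`. -/
def sorth (D : Submodule ℂ (Fin 6 → ℂ)) : Submodule ℂ (Fin 6 → ℂ) where
  carrier := {u | ∀ d ∈ D, omg d u = 0}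
  zero_mem' := by
    intro d _
    simp [omg]
  add_mem' := by
    intro a b ha hb d hd
    have h : omg d (a + b) = omg d a + omg d b := by
      simp only [omg, Pi.add_apply, mul_add]
      rw [← Finset.sum_add_distrib]
      exact Finset.sum_congr rfl fun i _ => by rw [← Finset.sum_add_distrib]
    simp only [Set.mem_setOf_eq] at *
    rw [h, ha d hd, hb d hd, add_zero]
  smul_mem' := by
    intro c a ha d hd
    have h : omg d (c • a) = c * omg d a := by
      simp only [omg, Pi.smul_apply, smul_eq_mul, Finset.mul_sum]
      exact Finset.sum_congr rfl fun i _ => Finset.sum_congr rfl fun j _ => by ring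
    simp only [Set.mem_setOf_eq] at *
    rw [h, ha d hd, mul_zero]

/-- The `i`-th spanning vector `e_i + Σ_j A_{ij} e_{j+3}` of the graph subspace `L_A`. -/
def graphVec (A : Matrix (Fin 3) (Fin 3) ℂ) (i : Fin 3) : Fin 6 → ℂ := fun k =>
  if h : (k : ℕ) < 3 then (if (k : ℕ) = (i : ℕ) then 1 else 0)
  else A i ⟨(k : ℕ) - 3, by omega⟩

/-- The graph subspace `L_A = span{e_i + Σ_j A_{ij} e_{j+3} : i = 1, 2, 3} ⊆ ℂ⁶`. -/
def LA (A : Matrix (Fin 3) (Fin 3) ℂ) : Submodule ℂ (Fin 6 → ℂ) :=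
  Submodule.span ℂ (Set.range (graphVec A))

/-- The totally antisymmetric array determined by `η(3,4,6) = 1` and
`η(2,4,5) = -1` (all entries not obtained from these two by permutations being
zero), written via Plücker arrays of basis vectors. -/
def etaG : Fin 6 → Fin 6 → Fin 6 → ℂ :=
  fun i j l => plk ![stdv 2, stdv 3, stdv 5] i j l - plk ![stdv 1, stdv 3, stdv 4] i j l

/-- The `3`-dimensional subspace `D = span{e₁, e₃, e₆} ⊆ ℂ⁶`. -/
def Dgou : Submodule ℂ (Fin 6 → ℂ) :=
  Submodule.span ℂ {stdv 0, stdv 2, stdv 5}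


/-! ### Auxiliary integer mirrors and lemmas -/

def stdvZ (m : Fin 6) : Fin 6 → ℤ := fun i => if i = m then 1 else 0

def plkZ (v : Fin 3 → Fin 6 → ℤ) : Fin 6 → Fin 6 → Fin 6 → ℤ :=
  fun i j k => Matrix.det (Matrix.of fun m n => v m (![i, j, k] n))

def eZ : Fin 6 → Fin 6 → Fin 6 → ℤ :=
  fun i j l => plkZ ![stdvZ 2, stdvZ 3, stdvZ 5] i j l - plkZ ![stdvZ 1, stdvZ 3, stdvZ 4] i j l

def eT : Fin 6 → Fin 6 → Fin 6 → ℤ := fun i j k =>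
  if i = 2 ∧ j = 3 ∧ k = 5 then 1 else
  if i = 3 ∧ j = 5 ∧ k = 2 then 1 else
  if i = 5 ∧ j = 2 ∧ k = 3 then 1 else
  if i = 3 ∧ j = 2 ∧ k = 5 then -1 else
  if i = 2 ∧ j = 5 ∧ k = 3 then -1 else
  if i = 5 ∧ j = 3 ∧ k = 2 then -1 else
  if i = 1 ∧ j = 3 ∧ k = 4 then -1 else
  if i = 3 ∧ j = 4 ∧ k = 1 then -1 else
  if i = 4 ∧ j = 1 ∧ k = 3 then -1 else
  if i = 3 ∧ j = 1 ∧ k = 4 then 1 else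
  if i = 1 ∧ j = 4 ∧ k = 3 then 1 else
  if i = 4 ∧ j = 3 ∧ k = 1 then 1 else 0

def WZ : Fin 6 → Fin 6 → ℤ := fun i j =>
  if (i : ℕ) + 3 = (j : ℕ) then -1 else if (j : ℕ) + 3 = (i : ℕ) then 1 else 0

set_option maxHeartbeats 4000000 in
lemma eZ_eq_eT : eZ = eT := by decide

lemma stdv_cast (m i : Fin 6) : stdv m i = ((stdvZ m i : ℤ) : ℂ) := by
  simp only [stdv, stdvZ]; split_ifs <;> norm_num

lemma plk_cast (a b c : Fin 6) (i j k : Fin 6) :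
    plk ![stdv a, stdv b, stdv c] i j k = ((plkZ ![stdvZ a, stdvZ b, stdvZ c] i j k : ℤ) : ℂ) := by
  have h : ((plkZ ![stdvZ a, stdvZ b, stdvZ c] i j k : ℤ) : ℂ)
      = ((Matrix.of fun m n => (![stdvZ a, stdvZ b, stdvZ c] m (![i, j, k] n))).map
          (fun x : ℤ => (x : ℂ))).det := RingHom.map_det (Int.castRingHom ℂ) _
  unfold plk
  rw [h]
  congr 1
  ext m n
  fin_cases m <;> simp [stdv_cast, Matrix.map_apply]

lemma etaG_eq (i j l : Fin 6) : etaG i j l = ((eT i j l : ℤ) : ℂ) := by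
  show plk _ i j l - plk _ i j l = _
  rw [plk_cast, plk_cast, ← Int.cast_sub, ← eZ_eq_eT]
  rfl

lemma W_cast (i j : Fin 6) : W i j = ((WZ i j : ℤ) : ℂ) := by
  simp only [W, J, WZ, Matrix.neg_apply, Matrix.of_apply]
  split_ifs <;> norm_num

set_option maxHeartbeats 1000000 in
lemma effZ : ∀ k, (∑ i, ∑ j, WZ i j * eT i j k) = 0 := by decide

set_option maxHeartbeats 12000000 in
lemma klrZ : ∀ a b, (∑ i, ∑ j, ∑ h, ∑ k, eT a i j * eT b h k * WZ i h * WZ j k)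
    = if (3 : Fin 6) = a ∧ (3 : Fin 6) = b then 4 else 0 := by decide

set_option maxHeartbeats 1000000 in
lemma eT_swap : (∀ i j k, eT j i k = -eT i j k) ∧ (∀ i j k, eT i k j = -eT i j k) ∧
    (∀ i j k, eT k j i = -eT i j k) := by
  refine ⟨?_, ?_, ?_⟩ <;> decide

set_option maxHeartbeats 2000000 in
lemma triple_sum (x y z : Fin 6 → ℂ) :
    (∑ i, ∑ j, ∑ l, ((eT i j l : ℤ) : ℂ) * x i * y j * z l) =
    x 2 * y 3 * z 5 + x 3 * y 5 * z 2 + x 5 * y 2 * z 3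
      - x 3 * y 2 * z 5 - x 2 * y 5 * z 3 - x 5 * y 3 * z 2
      - x 1 * y 3 * z 4 - x 3 * y 4 * z 1 - x 4 * y 1 * z 3
      + x 3 * y 1 * z 4 + x 1 * y 4 * z 3 + x 4 * y 3 * z 1 := by
  simp only [Fin.sum_univ_six]
  simp (config := { decide := true }) only [eT]
  push_cast
  ring

section gv
variable (A : Matrix (Fin 3) (Fin 3) ℂ)

lemma gv00 : graphVec A 0 0 = 1 := rfl
lemma gv01 : graphVec A 0 1 = 0 := rfl
lemma gv02 : graphVec A 0 2 = 0 := rfl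
lemma gv03 : graphVec A 0 3 = A 0 0 := rfl
lemma gv04 : graphVec A 0 4 = A 0 1 := rfl
lemma gv05 : graphVec A 0 5 = A 0 2 := rfl
lemma gv10 : graphVec A 1 0 = 0 := rfl
lemma gv11 : graphVec A 1 1 = 1 := rfl
lemma gv12 : graphVec A 1 2 = 0 := rfl
lemma gv13 : graphVec A 1 3 = A 1 0 := rfl
lemma gv14 : graphVec A 1 4 = A 1 1 := rfl
lemma gv15 : graphVec A 1 5 = A 1 2 := rfl
lemma gv20 : graphVec A 2 0 = 0 := rfl
lemma gv21 : graphVec A 2 1 = 0 := rfl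
lemma gv22 : graphVec A 2 2 = 1 := rfl
lemma gv23 : graphVec A 2 3 = A 2 0 := rfl
lemma gv24 : graphVec A 2 4 = A 2 1 := rfl
lemma gv25 : graphVec A 2 5 = A 2 2 := rfl

end gv

/-- The coordinate-vanishing submodule. -/
def zset (s : Set (Fin 6)) : Submodule ℂ (Fin 6 → ℂ) where
  carrier := {u | ∀ i ∈ s, u i = 0}
  zero_mem' := fun i _ => rfl
  add_mem' := fun ha hb i hi => by simp [ha i hi, hb i hi]
  smul_mem' := fun c {u} hu i hi => by simp [hu i hi]

lemma mem_zset {s : Set (Fin 6)} {u : Fin 6 → ℂ} : u ∈ zset s ↔ ∀ i ∈ s, u i = 0 := Iff.rfl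

lemma mem_sorth {D : Submodule ℂ (Fin 6 → ℂ)} {u : Fin 6 → ℂ} :
    u ∈ sorth D ↔ ∀ d ∈ D, omg d u = 0 := Iff.rfl

lemma omg_add_left (a b u : Fin 6 → ℂ) : omg (a + b) u = omg a u + omg b u := by
  simp only [omg, Pi.add_apply, add_mul, Finset.sum_add_distrib]

lemma omg_smul_left (c : ℂ) (a u : Fin 6 → ℂ) : omg (c • a) u = c * omg a u := by
  simp only [omg, Pi.smul_apply, smul_eq_mul, Finset.mul_sum, mul_assoc]

lemma omg_zero_left (u : Fin 6 → ℂ) : omg 0 u = 0 := by simp [omg]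

lemma mem_sorth_span {S : Set (Fin 6 → ℂ)} {u : Fin 6 → ℂ} :
    u ∈ sorth (Submodule.span ℂ S) ↔ ∀ d ∈ S, omg d u = 0 := by
  constructor
  · exact fun h d hd => h d (Submodule.subset_span hd)
  · intro h d hd
    induction hd using Submodule.span_induction with
    | mem x hx => exact h x hx
    | zero => exact omg_zero_left u
    | add x y _ _ hx hy => rw [omg_add_left, hx, hy, add_zero]
    | smul c x _ hx => rw [omg_smul_left, hx, mul_zero]

lemma omg_stdv0 (u : Fin 6 → ℂ) : omg (stdv 0) u = u 3 := by
  simp (config := { decide := true }) [omg, stdv, J, Fin.sum_univ_six]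

lemma omg_stdv2 (u : Fin 6 → ℂ) : omg (stdv 2) u = u 5 := by
  simp (config := { decide := true }) [omg, stdv, J, Fin.sum_univ_six]

lemma omg_stdv5 (u : Fin 6 → ℂ) : omg (stdv 5) u = -u 2 := by
  simp (config := { decide := true }) [omg, stdv, J, Fin.sum_univ_six]

lemma mem_Dgou {u : Fin 6 → ℂ} : u ∈ Dgou ↔ (u 1 = 0 ∧ u 3 = 0 ∧ u 4 = 0) := by
  constructor
  · intro hu
    have hle : Dgou ≤ zset {1, 3, 4} := by
      rw [Dgou, Submodule.span_le]
      rintro x (rfl | rfl | rfl) <;> intro i hi <;>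
        rcases hi with rfl | rfl | rfl <;>
        simp (config := { decide := true }) [stdv]
    have := hle hu
    exact ⟨this 1 (by simp), this 3 (by simp), this 4 (by simp)⟩
  · rintro ⟨h1, h3, h4⟩
    have hu : u = u 0 • stdv 0 + u 2 • stdv 2 + u 5 • stdv 5 := by
      funext i
      fin_cases i <;>
        simp (config := { decide := true }) [stdv, h1, h3, h4]
    rw [hu]
    refine Submodule.add_mem _ (Submodule.add_mem _ ?_ ?_) ?_ <;>
      exact Submodule.smul_mem _ _ (Submodule.subset_span (by simp))

lemma mem_span014 {u : Fin 6 → ℂ} :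
    u ∈ Submodule.span ℂ {stdv 0, stdv 1, stdv 4} ↔ (u 2 = 0 ∧ u 3 = 0 ∧ u 5 = 0) := by
  constructor
  · intro hu
    have hle : Submodule.span ℂ {stdv 0, stdv 1, stdv 4} ≤ zset {2, 3, 5} := by
      rw [Submodule.span_le]
      rintro x (rfl | rfl | rfl) <;> intro i hi <;>
        rcases hi with rfl | rfl | rfl <;>
        simp (config := { decide := true }) [stdv]
    have := hle hu
    exact ⟨this 2 (by simp), this 3 (by simp), this 5 (by simp)⟩
  · rintro ⟨h2, h3, h5⟩
    have hu : u = u 0 • stdv 0 + u 1 • stdv 1 + u 4 • stdv 4 := by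
      funext i
      fin_cases i <;>
        simp (config := { decide := true }) [stdv, h2, h3, h5]
    rw [hu]
    refine Submodule.add_mem _ (Submodule.add_mem _ ?_ ?_) ?_ <;>
      exact Submodule.smul_mem _ _ (Submodule.subset_span (by simp))

lemma mem_span0 {u : Fin 6 → ℂ} :
    u ∈ Submodule.span ℂ {stdv 0} ↔
      (u 1 = 0 ∧ u 2 = 0 ∧ u 3 = 0 ∧ u 4 = 0 ∧ u 5 = 0) := by
  rw [Submodule.mem_span_singleton]
  constructor
  · rintro ⟨c, rfl⟩
    simp (config := { decide := true }) [stdv]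
  · rintro ⟨h1, h2, h3, h4, h5⟩
    refine ⟨u 0, ?_⟩
    funext i
    fin_cases i <;> simp (config := { decide := true }) [stdv, h1, h2, h3, h4, h5]

lemma mem_sorth_Dgou {u : Fin 6 → ℂ} :
    u ∈ sorth Dgou ↔ (u 2 = 0 ∧ u 3 = 0 ∧ u 5 = 0) := by
  rw [show Dgou = Submodule.span ℂ {stdv 0, stdv 2, stdv 5} from rfl, mem_sorth_span]
  simp only [Set.mem_insert_iff, Set.mem_singleton_iff, forall_eq_or_imp, forall_eq,
    omg_stdv0, omg_stdv2, omg_stdv5, neg_eq_zero]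
  tauto

/-- For the Goursat-type array `η` with `η(3,4,6) = 1`, `η(2,4,5) = -1` and
`D = span{e₁, e₃, e₆}`:
(i) `η` is effective, and on the Lagrangian subspace `L_A` spanned by
`v_i = e_i + Σ_j A_{ij} e_{j+3}` (`A` symmetric) one has
`Σ η(i,j,k) (v₁)_i (v₂)_j (v₃)_k = 2(A₁₁A₂₃ - A₁₂A₁₃)`, which vanishes iff
`L_A ∩ D ≠ 0` (the hyperplane section cut out by `η` is the Goursat–Schubert cycle);
(ii) `D^⊥ = span{e₁, e₂, e₅}` and `D ∩ D^⊥ = ℂ·e₁`;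
(iii) the only nonzero entry of `q(η)` is `q(η)(4,4) = 4`, and its zero locus
`{u : q(η)(u,u) = 0}` is the hyperplane `{u : u₄ = 0} = (D ∩ D^⊥)^⊥`: the
cocharacteristic variety of this Goursat-type Monge–Ampère equation is the
hyperplane `(D ∩ D^⊥)^⊥`. -/
theorem statement_19 :
    -- the array and its defining entries
    etaG 2 3 5 = 1 ∧ etaG 1 3 4 = -1 ∧ IsAlt etaG ∧
    -- (i) effectivity and the hyperplane section
    IsEff etaG ∧
    (∀ A : Matrix (Fin 3) (Fin 3) ℂ, A.IsSymm →
      (∑ i, ∑ j, ∑ l, etaG i j l * graphVec A 0 i * graphVec A 1 j * graphVec A 2 l)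
          = 2 * (A 0 0 * A 1 2 - A 0 1 * A 0 2) ∧
      ((∑ i, ∑ j, ∑ l, etaG i j l * graphVec A 0 i * graphVec A 1 j * graphVec A 2 l) = 0
        ↔ LA A ⊓ Dgou ≠ ⊥)) ∧
    -- (ii) the symplectic orthogonal and the characteristic line
    sorth Dgou = Submodule.span ℂ {stdv 0, stdv 1, stdv 4} ∧
    Dgou ⊓ sorth Dgou = Submodule.span ℂ {stdv 0} ∧
    -- (iii) the KLR contraction and the cocharacteristic variety
    klr etaG = Matrix.single 3 3 (4 : ℂ) ∧
    {u : Fin 6 → ℂ | (∑ a, ∑ b, u a * klr etaG a b * u b) = 0} = {u : Fin 6 → ℂ | u 3 = 0} ∧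
    {u : Fin 6 → ℂ | u 3 = 0} = ↑(sorth (Dgou ⊓ sorth Dgou)) := by
  have hklr : klr etaG = Matrix.single 3 3 (4 : ℂ) := by
    ext a b
    show (∑ i, ∑ j, ∑ h, ∑ k, etaG a i j * etaG b h k * W i h * W j k) = _
    have hcast : (∑ i, ∑ j, ∑ h, ∑ k, etaG a i j * etaG b h k * W i h * W j k)
        = ((∑ i, ∑ j, ∑ h, ∑ k, eT a i j * eT b h k * WZ i h * WZ j k : ℤ) : ℂ) := by
      simp only [etaG_eq, W_cast, ← Int.cast_mul, ← Int.cast_sum]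
    rw [hcast, klrZ a b]
    by_cases h3 : (3 : Fin 6) = a <;> by_cases h3' : (3 : Fin 6) = b <;>
      simp [Matrix.single, h3, h3']
  have hDperp : sorth Dgou = Submodule.span ℂ {stdv 0, stdv 1, stdv 4} := by
    ext u
    rw [mem_sorth_Dgou, mem_span014]
  have hinf : Dgou ⊓ sorth Dgou = Submodule.span ℂ {stdv 0} := by
    ext u
    rw [Submodule.mem_inf, mem_Dgou, mem_sorth_Dgou, mem_span0]
    tauto
  refine ⟨?_, ?_, ?_, ?_, ?_, hDperp, hinf, hklr, ?_, ?_⟩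
  · rw [etaG_eq]
    simp (config := { decide := true }) [eT]
  · rw [etaG_eq]
    simp (config := { decide := true }) [eT]
  · refine ⟨?_, ?_, ?_⟩ <;> intro i j k <;> rw [etaG_eq, etaG_eq]
    · rw [eT_swap.1 i j k]; push_cast; ring
    · rw [eT_swap.2.1 i j k]; push_cast; ring
    · rw [eT_swap.2.2 i j k]; push_cast; ring
  · intro k
    have hcast : (∑ i, ∑ j, W i j * etaG i j k)
        = ((∑ i, ∑ j, WZ i j * eT i j k : ℤ) : ℂ) := by
      simp only [etaG_eq, W_cast, ← Int.cast_mul, ← Int.cast_sum]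
    rw [hcast, effZ k, Int.cast_zero]
  · intro A hA
    have h10 : A 1 0 = A 0 1 := (hA.apply 1 0).symm
    have h20 : A 2 0 = A 0 2 := (hA.apply 2 0).symm
    have h21 : A 2 1 = A 1 2 := (hA.apply 2 1).symm
    have hform : (∑ i, ∑ j, ∑ l, etaG i j l * graphVec A 0 i * graphVec A 1 j * graphVec A 2 l)
        = 2 * (A 0 0 * A 1 2 - A 0 1 * A 0 2) := by
      simp only [etaG_eq]
      rw [triple_sum]
      simp only [gv00, gv01, gv02, gv03, gv04, gv05, gv10, gv11, gv12, gv13, gv14, gv15,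
        gv20, gv21, gv22, gv23, gv24, gv25, h10, h20, h21]
      ring
    refine ⟨hform, ?_⟩
    rw [hform]
    have h2P : 2 * (A 0 0 * A 1 2 - A 0 1 * A 0 2) = 0 ↔
        A 0 0 * A 1 2 - A 0 1 * A 0 2 = 0 := by
      constructor
      · intro h
        rcases mul_eq_zero.mp h with h | h
        · exact absurd h two_ne_zero
        · exact h
      · intro h; rw [h, mul_zero]
    rw [h2P]
    constructor
    · intro hP
      obtain ⟨c0, c2, hc, e1, e2⟩ : ∃ c0 c2 : ℂ, ¬(c0 = 0 ∧ c2 = 0) ∧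
          c0 * A 0 0 + c2 * A 0 2 = 0 ∧ c0 * A 0 1 + c2 * A 1 2 = 0 := by
        by_cases h1 : A 0 2 = 0 ∧ A 0 0 = 0
        · by_cases h2 : A 1 2 = 0 ∧ A 0 1 = 0
          · exact ⟨1, 0, by simp, by rw [h1.1, h1.2]; ring, by rw [h2.1, h2.2]; ring⟩
          · refine ⟨A 1 2, -A 0 1, ?_, by rw [h1.1, h1.2]; ring, by ring⟩
            rintro ⟨ha, hb⟩
            exact h2 ⟨ha, by simpa using hb⟩
        · refine ⟨A 0 2, -A 0 0, ?_, by ring, by linear_combination -hP⟩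
          rintro ⟨ha, hb⟩
          exact h1 ⟨ha, by simpa using hb⟩
      set x := c0 • graphVec A 0 + c2 • graphVec A 2 with hxdef
      have hxLA : x ∈ LA A := by
        refine Submodule.add_mem _ ?_ ?_ <;>
          exact Submodule.smul_mem _ _ (Submodule.subset_span ⟨_, rfl⟩)
      have hxD : x ∈ Dgou := by
        rw [mem_Dgou]
        refine ⟨?_, ?_, ?_⟩ <;>
          simp only [hxdef, Pi.add_apply, Pi.smul_apply, smul_eq_mul]
        · rw [gv01, gv21]; ring
        · rw [gv03, gv23, h20]; exact e1
        · rw [gv04, gv24, h21]; exact e2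
      have hxne : x ≠ 0 := by
        intro h0
        apply hc
        have ha := congrFun h0 0
        have hb := congrFun h0 2
        simp only [hxdef, Pi.add_apply, Pi.smul_apply, smul_eq_mul, gv00, gv20, gv02, gv22,
          Pi.zero_apply, mul_one, mul_zero, add_zero, zero_add] at ha hb
        exact ⟨ha, hb⟩
      rw [Submodule.ne_bot_iff]
      exact ⟨x, Submodule.mem_inf.mpr ⟨hxLA, hxD⟩, hxne⟩
    · intro h
      obtain ⟨x, hx, hxne⟩ := (Submodule.ne_bot_iff _).mp h
      obtain ⟨hxLA, hxD⟩ := Submodule.mem_inf.mp hx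
      rw [LA, Submodule.mem_span_range_iff_exists_fun] at hxLA
      obtain ⟨c, hc⟩ := hxLA
      have coord : ∀ k : Fin 6, x k = c 0 * graphVec A 0 k + c 1 * graphVec A 1 k
          + c 2 * graphVec A 2 k := by
        intro k
        rw [← hc]
        simp [Fin.sum_univ_three]
      rw [mem_Dgou] at hxD
      obtain ⟨hx1, hx3, hx4⟩ := hxD
      have hc1 : c 1 = 0 := by
        have h := coord 1
        rw [hx1, gv01, gv11, gv21] at h
        linear_combination -h
      have e1 : c 0 * A 0 0 + c 2 * A 0 2 = 0 := by
        have h := coord 3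
        rw [hx3, gv03, gv13, gv23, hc1, h20] at h
        linear_combination -h
      have e2 : c 0 * A 0 1 + c 2 * A 1 2 = 0 := by
        have h := coord 4
        rw [hx4, gv04, gv14, gv24, hc1, h21] at h
        linear_combination -h
      have hcz : ¬(c 0 = 0 ∧ c 2 = 0) := by
        rintro ⟨h0, h2⟩
        apply hxne
        funext k
        rw [coord k, h0, h2, hc1]
        simp
      rcases not_and_or.mp hcz with h0 | h2
      · have hz : c 0 * (A 0 0 * A 1 2 - A 0 1 * A 0 2) = 0 := by
          linear_combination A 1 2 * e1 - A 0 2 * e2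
        exact (mul_eq_zero.mp hz).resolve_left h0
      · have hz : c 2 * (A 0 0 * A 1 2 - A 0 1 * A 0 2) = 0 := by
          linear_combination A 0 0 * e2 - A 0 1 * e1
        exact (mul_eq_zero.mp hz).resolve_left h2
  · ext u
    simp only [Set.mem_setOf_eq, hklr]
    have hq : (∑ a, ∑ b, u a * Matrix.single 3 3 (4 : ℂ) a b * u b)
        = 4 * (u 3 * u 3) := by
      simp (config := { decide := true }) [Matrix.single, Fin.sum_univ_six]
      ring
    rw [hq]
    constructor
    · intro hz
      rcases mul_eq_zero.mp hz with h | h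
      · exact absurd h (by norm_num)
      · exact mul_self_eq_zero.mp h
    · intro hz; rw [hz]; ring
  · rw [hinf]
    ext u
    simp only [Set.mem_setOf_eq, SetLike.mem_coe, mem_sorth_span, Set.mem_singleton_iff,
      forall_eq, omg_stdv0]
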